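/- Let Y be standard Gaussian in R^p, p ≥ 1, and λ_1, ..., λ_p > 0. Then for each i, E[λ_i Y_i² / Σ_j λ_j Y_j²] = (λ_i / 2) ∫_0^∞ dx / ( (1 + λ_i x) ∏_{j=1}^p (1 + λ_j x)^{1/2} ). -/

import Mathlib

open MeasureTheory ProbabilityTheory Real

open scoped ENNReal NNReal

/-- The law of a vector of `p` i.i.d. standard normal random variables. -/
noncomputable def stdGaussianPi (p : ℕ) : Measure (Fin p → ℝ) :=
  Measure.pi fun _ => gaussianReal 0 1

/-- The `i`-th eigenvalue of the spatial sign covariance matrix corresponding to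
shape eigenvalues `lam`. -/
noncomputable def sscmEigen (p : ℕ) (lam : Fin p → ℝ) (i : Fin p) : ℝ :=
  ∫ ω, lam i * (ω i) ^ 2 / (∑ j, lam j * (ω j) ^ 2) ∂(stdGaussianPi p)

open Set Filter

set_option maxHeartbeats 1000000

lemma aux_exp_int {s : ℝ} (hs : 0 < s) :
    ∫ x in Set.Ioi (0:ℝ), Real.exp (-(s*x)) = s⁻¹ := by
  have := integral_comp_mul_left_Ioi (fun x => Real.exp (-x)) 0 hs
  simp only [mul_zero] at this
  rw [show (fun x => Real.exp (-(s*x))) = fun x => Real.exp (-(s*x)) from rfl]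
  calc ∫ x in Set.Ioi (0:ℝ), Real.exp (-(s*x))
      = s⁻¹ • ∫ x in Set.Ioi (0:ℝ), Real.exp (-x) := this
    _ = s⁻¹ := by rw [integral_exp_neg_Ioi_zero]; simp

lemma aux_sq_exp {b : ℝ} (hb : 0 < b) :
    ∫ x : ℝ, x^2 * Real.exp (-b * x^2) = Real.sqrt (π/b) / (2*b) := by
  have hint2 : Integrable (fun x : ℝ => x^2 * Real.exp (-b * x^2)) := by
    have := integrable_rpow_mul_exp_neg_mul_sq hb (s := 2) (by norm_num)
    simpa [Real.rpow_natCast] using this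
  have hint0 : Integrable (fun x : ℝ => Real.exp (-b * x^2)) := integrable_exp_neg_mul_sq hb
  set f : ℝ → ℝ := fun x => -(2*b)⁻¹ * x * Real.exp (-b * x^2) with hf
  have hder : ∀ x : ℝ, HasDerivAt f
      (x^2 * Real.exp (-b * x^2) - (2*b)⁻¹ * Real.exp (-b * x^2)) x := by
    intro x
    have h1 : HasDerivAt (fun x : ℝ => -b * x^2) (-b * (2*x)) x := by
      simpa using ((hasDerivAt_pow 2 x).const_mul (-b))
    have h2 := h1.exp
    have h3 := ((hasDerivAt_id x).const_mul (-(2*b)⁻¹)).mul h2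
    refine h3.congr_deriv ?_
    have hb' : b ≠ 0 := hb.ne'
    simp only [id]
    field_simp
    ring
  have hlim : Tendsto f (Filter.cocompact ℝ) (nhds 0) := by
    have := tendsto_rpow_abs_mul_exp_neg_mul_sq_cocompact hb 1
    rw [tendsto_zero_iff_norm_tendsto_zero]
    have hnorm : ∀ x : ℝ, ‖f x‖ = (2*b)⁻¹ * (|x| ^ (1:ℝ) * Real.exp (-b * x^2)) := by
      intro x
      simp only [hf, norm_mul, Real.norm_eq_abs, abs_mul, abs_neg, abs_inv,
        Real.rpow_one, abs_of_nonneg (Real.exp_pos _).le]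
      rw [abs_of_nonneg (by norm_num : (0:ℝ) ≤ 2), abs_of_nonneg hb.le]
      ring
    simp_rw [hnorm]
    simpa using this.const_mul ((2*b)⁻¹)
  have htop : Tendsto f atTop (nhds 0) := hlim.mono_left atTop_le_cocompact
  have hbot : Tendsto f atBot (nhds 0) := hlim.mono_left atBot_le_cocompact
  have key := MeasureTheory.integral_of_hasDerivAt_of_tendsto hder (hint2.sub (hint0.const_mul _)) hbot htop
  rw [sub_zero] at key
  rw [integral_sub hint2 (hint0.const_mul ((2*b)⁻¹)), integral_const_mul, integral_gaussian] at key
  have h2 : ∫ x : ℝ, x^2 * Real.exp (-b * x^2) = (2*b)⁻¹ * Real.sqrt (π/b) := by linarith [key]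
  rw [h2]; ring

lemma integral_gaussianReal_std (g : ℝ → ℝ) :
    ∫ y, g y ∂(gaussianReal 0 1) = ∫ y, gaussianPDFReal 0 1 y * g y := by
  rw [gaussianReal_of_var_ne_zero _ one_ne_zero, gaussianPDF_def]
  have hmeas : Measurable fun y => (gaussianPDFReal 0 1 y).toNNReal :=
    (measurable_gaussianPDFReal 0 1).real_toNNReal
  rw [show (fun y => ENNReal.ofReal (gaussianPDFReal 0 1 y))
      = fun y => ((gaussianPDFReal 0 1 y).toNNReal : ℝ≥0∞) from rfl,
    integral_withDensity_eq_integral_smul hmeas]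
  congr 1
  ext y
  rw [NNReal.smul_def, Real.coe_toNNReal _ (gaussianPDFReal_nonneg 0 1 y), smul_eq_mul]

lemma gaussianPDFReal_std (y : ℝ) :
    gaussianPDFReal 0 1 y = (Real.sqrt (2 * π))⁻¹ * Real.exp (-(2⁻¹ * y^2)) := by
  simp only [gaussianPDFReal, NNReal.coe_one, mul_one, sub_zero]
  congr 1
  ring

lemma gauss_A {c : ℝ} (hc : 0 ≤ c) :
    ∫ y, Real.exp (-(c * y^2)) ∂(gaussianReal 0 1) = (Real.sqrt (1+2*c))⁻¹ := by
  rw [integral_gaussianReal_std]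
  have heq : ∀ y : ℝ, gaussianPDFReal 0 1 y * Real.exp (-(c * y^2))
      = (Real.sqrt (2*π))⁻¹ * Real.exp (-(c + 2⁻¹) * y^2) := by
    intro y
    rw [gaussianPDFReal_std, mul_assoc, ← Real.exp_add]
    ring_nf
  simp_rw [heq]
  rw [integral_const_mul, integral_gaussian]
  rw [show π / (c + 2⁻¹) = (2*π) / (1 + 2*c) by field_simp; ring]
  rw [Real.sqrt_div (by positivity) _]
  have h2π : Real.sqrt (2*π) ≠ 0 := by positivity
  have h1c : Real.sqrt (1+2*c) ≠ 0 := by positivity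
  field_simp

lemma gauss_B {c : ℝ} (hc : 0 ≤ c) :
    ∫ y, y^2 * Real.exp (-(c * y^2)) ∂(gaussianReal 0 1)
      = ((1+2*c) * Real.sqrt (1+2*c))⁻¹ := by
  rw [integral_gaussianReal_std]
  have heq : ∀ y : ℝ, gaussianPDFReal 0 1 y * (y^2 * Real.exp (-(c * y^2)))
      = (Real.sqrt (2*π))⁻¹ * (y^2 * Real.exp (-(c + 2⁻¹) * y^2)) := by
    intro y
    rw [gaussianPDFReal_std]
    rw [show -(c + 2⁻¹) * y^2 = -(2⁻¹*y^2) + -(c*y^2) by ring, Real.exp_add]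
    ring
  simp_rw [heq]
  rw [integral_const_mul, aux_sq_exp (by positivity : (0:ℝ) < c + 2⁻¹)]
  rw [show π / (c + 2⁻¹) = (2*π) / (1 + 2*c) by field_simp; ring]
  rw [Real.sqrt_div (by positivity) _]
  rw [show 2 * (c+2⁻¹) = 1 + 2*c by ring]
  have h2π : Real.sqrt (2*π) ≠ 0 := by positivity
  have h1c : Real.sqrt (1+2*c) ≠ 0 := by positivity
  have h1c' : (1+2*c) ≠ 0 := by positivity
  field_simp

lemma pi_factor (p : ℕ) (f : Fin p → ℝ → ℝ) :
    ∫ ω, ∏ j, f j (ω j) ∂(stdGaussianPi p) = ∏ j, ∫ y, f j y ∂(gaussianReal 0 1) := by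
  letI : MeasureSpace ℝ := { volume := gaussianReal 0 1 }
  haveI : SigmaFinite (volume : Measure ℝ) :=
    (inferInstance : SigmaFinite (gaussianReal 0 1))
  have h : stdGaussianPi p = (volume : Measure (Fin p → ℝ)) := by
    rw [stdGaussianPi, volume_pi]; rfl
  rw [h]
  exact integral_fintype_prod_eq_prod f

instance : NullSingletonClass (gaussianReal 0 1) :=
  ⟨fun x => (gaussianReal_absolutelyContinuous 0 one_ne_zero) (measure_singleton x)⟩

instance (p : ℕ) : IsProbabilityMeasure (stdGaussianPi p) := by
  rw [stdGaussianPi]; infer_instance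

theorem sscmEigen_integral_repr (p : ℕ) (hp : 1 ≤ p) (lam : Fin p → ℝ)
    (hpos : ∀ i, 0 < lam i) (i : Fin p) :
    sscmEigen p lam i =
      lam i / 2 *
        ∫ x in Set.Ioi (0 : ℝ),
          1 / ((1 + lam i * x) * ∏ j, Real.sqrt (1 + lam j * x)) := by
  set μ := stdGaussianPi p with hμ
  set S : (Fin p → ℝ) → ℝ := fun ω => ∑ j, lam j * (ω j) ^ 2 with hS
  have hSmeas : Measurable S := by
    apply Finset.measurable_sum
    intro j _
    exact ((measurable_pi_apply j).pow_const 2).const_mul _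
  have hS_nonneg : ∀ ω, 0 ≤ S ω := fun ω =>
    Finset.sum_nonneg fun j _ => mul_nonneg (hpos j).le (sq_nonneg _)
  have hfrac_le : ∀ ω, lam i * (ω i)^2 ≤ S ω := fun ω =>
    Finset.single_le_sum (fun j _ => mul_nonneg (hpos j).le (sq_nonneg _)) (Finset.mem_univ i)
  have hS_pos : ∀ᵐ ω ∂μ, 0 < S ω := by
    have k : Fin p := ⟨0, hp⟩
    filter_upwards [MeasureTheory.Measure.ae_eval_ne (μ := fun _ : Fin p => gaussianReal 0 1) k 0]
      with ω hω
    calc (0:ℝ) < lam k * (ω k)^2 := by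
          have : (ω k)^2 > 0 := by positivity
          exact mul_pos (hpos k) this
      _ ≤ S ω := Finset.single_le_sum (fun j _ => mul_nonneg (hpos j).le (sq_nonneg _))
          (Finset.mem_univ k)
  set G : (Fin p → ℝ) → ℝ → ℝ := fun ω x => (lam i * (ω i)^2) * Real.exp (-(S ω * x)) with hG
  -- Step 1
  have step1 : sscmEigen p lam i = ∫ ω, (∫ x in Set.Ioi (0:ℝ), G ω x) ∂μ := by
    rw [sscmEigen]
    apply integral_congr_ae
    filter_upwards [hS_pos] with ω hω
    rw [hG]
    simp only
    rw [MeasureTheory.integral_const_mul, aux_exp_int hω, div_eq_mul_inv]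
  -- Integrability on the product
  have hGm : AEStronglyMeasurable (Function.uncurry G) (μ.prod (volume.restrict (Set.Ioi 0))) := by
    apply Measurable.aestronglyMeasurable
    apply Measurable.mul
    · exact (((measurable_pi_apply i).comp measurable_fst).pow_const 2).const_mul _
    · exact (((hSmeas.comp measurable_fst).mul measurable_snd).neg).exp
  have hGint : Integrable (Function.uncurry G) (μ.prod (volume.restrict (Set.Ioi 0))) := by
    rw [MeasureTheory.integrable_prod_iff hGm]
    simp only [Function.uncurry_apply_pair]
    constructor
    · filter_upwards [hS_pos] with ω hω
      have h2 : IntegrableOn (fun x => Real.exp (-(S ω) * x)) (Set.Ioi 0) volume :=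
        exp_neg_integrableOn_Ioi 0 hω
      simp_rw [neg_mul] at h2
      exact h2.const_mul _
    · apply MeasureTheory.Integrable.mono' (integrable_const (1:ℝ))
        (hGm.norm.integral_prod_right')
      filter_upwards [hS_pos] with ω hω
      simp only [Function.uncurry_apply_pair]
      have hnn : 0 ≤ lam i * (ω i)^2 := mul_nonneg (hpos i).le (sq_nonneg _)
      have : ∫ x in Set.Ioi (0:ℝ), ‖G ω x‖ = (lam i * (ω i)^2) * (S ω)⁻¹ := by
        have : ∀ x : ℝ, ‖G ω x‖ = (lam i * (ω i)^2) * Real.exp (-(S ω * x)) := by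
          intro x
          rw [hG]; simp only [Real.norm_eq_abs, abs_mul, abs_of_nonneg hnn,
            abs_of_nonneg (Real.exp_pos _).le]
        simp_rw [this]
        rw [MeasureTheory.integral_const_mul, aux_exp_int hω]
      rw [Real.norm_eq_abs, this, abs_of_nonneg (by positivity)]
      rw [← div_eq_mul_inv]
      exact div_le_one_of_le₀ (hfrac_le ω) (hS_nonneg ω)
  -- Step 2 : Fubini
  have step2 : ∫ ω, (∫ x in Set.Ioi (0:ℝ), G ω x) ∂μ
      = ∫ x in Set.Ioi (0:ℝ), (∫ ω, G ω x ∂μ) := integral_integral_swap hGint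
  -- Step 3 : compute inner integral for x > 0
  have step3 : ∀ x ∈ Set.Ioi (0:ℝ), ∫ ω, G ω x ∂μ
      = lam i * ((1 + 2*(x*lam i))⁻¹ * ∏ j, (Real.sqrt (1 + 2*(x*lam j)))⁻¹) := by
    intro x hx
    rw [Set.mem_Ioi] at hx
    classical
    set f : Fin p → ℝ → ℝ := fun j y =>
      if j = i then lam i * (y^2 * Real.exp (-((x*lam j) * y^2)))
      else Real.exp (-((x*lam j) * y^2)) with hf
    have hGf : ∀ ω, G ω x = ∏ j, f j (ω j) := by
      intro ω
      rw [hG]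
      simp only
      have hexp : Real.exp (-(S ω * x)) = ∏ j, Real.exp (-((x*lam j) * (ω j)^2)) := by
        rw [← Real.exp_sum]
        congr 1
        rw [hS, Finset.sum_mul, ← Finset.sum_neg_distrib]
        apply Finset.sum_congr rfl
        intro j _
        ring
      rw [hexp,
        ← Finset.mul_prod_erase Finset.univ (fun j => Real.exp (-((x*lam j) * (ω j)^2)))
          (Finset.mem_univ i),
        ← Finset.mul_prod_erase Finset.univ (fun j => f j (ω j)) (Finset.mem_univ i)]
      have h1 : f i (ω i) = lam i * ((ω i)^2 * Real.exp (-((x*lam i) * (ω i)^2))) := by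
        rw [hf]; simp
      have h2 : ∏ j ∈ Finset.univ.erase i, f j (ω j)
          = ∏ j ∈ Finset.univ.erase i, Real.exp (-((x*lam j) * (ω j)^2)) :=
        Finset.prod_congr rfl (fun j hj => by
          rw [hf]; simp [Finset.ne_of_mem_erase hj])
      rw [h1, h2]
      ring
    simp_rw [hGf]
    rw [pi_factor]
    have hval : ∀ j, ∫ y, f j y ∂(gaussianReal 0 1)
        = if j = i then lam i * ((1+2*(x*lam j)) * Real.sqrt (1+2*(x*lam j)))⁻¹
          else (Real.sqrt (1+2*(x*lam j)))⁻¹ := by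
      intro j
      have hc : 0 ≤ x * lam j := (mul_pos hx (hpos j)).le
      by_cases hji : j = i
      · subst hji
        rw [hf]
        simp only [eq_self_iff_true, if_true]
        rw [MeasureTheory.integral_const_mul, gauss_B hc]
      · rw [hf]
        simp only [if_neg hji]
        rw [gauss_A hc]
    rw [Finset.prod_congr rfl (fun j _ => hval j)]
    have hsplit : ∀ j, (if j = i then lam i * ((1+2*(x*lam j)) * Real.sqrt (1+2*(x*lam j)))⁻¹
          else (Real.sqrt (1+2*(x*lam j)))⁻¹)
        = (if j = i then lam i * (1+2*(x*lam j))⁻¹ else 1) * (Real.sqrt (1+2*(x*lam j)))⁻¹ := by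
      intro j
      by_cases h : j = i
      · simp only [h, eq_self_iff_true, if_true, mul_inv]
        ring
      · simp [h]
    rw [Finset.prod_congr rfl (fun j _ => hsplit j), Finset.prod_mul_distrib,
      Finset.prod_ite_eq' Finset.univ i (fun j => lam i * (1+2*(x*lam j))⁻¹)]
    simp only [Finset.mem_univ, if_pos]
    ring
  -- Step 4 : change of variables
  set g : ℝ → ℝ := fun y => lam i * ((1 + lam i * y)⁻¹ * ∏ j, (Real.sqrt (1 + lam j * y))⁻¹)
    with hg
  have hcomp : ∀ x : ℝ,
      lam i * ((1 + 2*(x*lam i))⁻¹ * ∏ j, (Real.sqrt (1 + 2*(x*lam j)))⁻¹) = g (2*x) := by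
    intro x
    simp only [hg]
    have h1 : (1 + 2*(x*lam i)) = 1 + lam i * (2*x) := by ring
    have h2 : ∀ j, Real.sqrt (1 + 2*(x*lam j)) = Real.sqrt (1 + lam j * (2*x)) :=
      fun j => by rw [show 1 + 2*(x*lam j) = 1 + lam j * (2*x) by ring]
    rw [h1]
    simp_rw [h2]
  have step4 : ∫ x in Set.Ioi (0:ℝ), (∫ ω, G ω x ∂μ)
      = 2⁻¹ * ∫ x in Set.Ioi (0:ℝ), g x := by
    rw [setIntegral_congr_fun measurableSet_Ioi (fun x hx => (step3 x hx).trans (hcomp x))]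
    have := integral_comp_mul_left_Ioi g 0 (by norm_num : (0:ℝ) < 2)
    rw [mul_zero] at this
    rw [this, smul_eq_mul]
  rw [step1, step2, step4, hg]
  simp only
  rw [MeasureTheory.integral_const_mul]
  have : ∀ x : ℝ, (1 + lam i * x)⁻¹ * ∏ j, (Real.sqrt (1 + lam j * x))⁻¹
      = 1 / ((1 + lam i * x) * ∏ j, Real.sqrt (1 + lam j * x)) := by
    intro x
    rw [one_div, mul_inv, Finset.prod_inv_distrib]
  simp_rw [this]
  ring
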